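/- Let A and B be n×n complex positive semidefinite matrices and let 1 ≤ k ≤ n. Then ∏_{t=n−k+1}^n λ_t(A + B) ≥ ∏_{t=n−k+1}^n (λ_t(A) + λ_t(B)) ≥ ∏_{t=n−k+1}^n λ_t(A) + ∏_{t=n−k+1}^n λ_t(B) + (2^k − 2) · ∏_{t=n−k+1}^n (λ_t(A) · λ_t(B))^{1/2}. -/

import Mathlib

open Matrix
open scoped ComplexOrder

/-- The `t`-th largest eigenvalue (0-indexed) of a Hermitian matrix
(junk value `0` if the matrix is not Hermitian). -/
noncomputable def eigval {n : ℕ} (A : Matrix (Fin n) (Fin n) ℂ) (t : Fin n) : ℝ :=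
  if h : A.IsHermitian then h.eigenvalues (Tuple.sort h.eigenvalues t.rev) else 0

/-- The `t`-th largest singular value (0-indexed) of a square complex matrix. -/
noncomputable def singval {n : ℕ} (X : Matrix (Fin n) (Fin n) ℂ) (t : Fin n) : ℝ :=
  Real.sqrt (eigval (Xᴴ * X) t)

namespace ProdEig

open Finset Complex


open Finset Complex

variable {n j : ℕ}

lemma eigval_antitone {M : Matrix (Fin n) (Fin n) ℂ} (hM : M.IsHermitian) :
    Antitone (eigval M) := by
  intro a b hab
  simp only [eigval, dif_pos hM]
  exact Tuple.monotone_sort hM.eigenvalues (Fin.rev_le_rev.mpr hab)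

lemma eigval_nonneg {M : Matrix (Fin n) (Fin n) ℂ} (hM : M.PosSemidef) (t : Fin n) :
    0 ≤ eigval M t := by
  simp only [eigval, dif_pos hM.isHermitian]
  exact hM.eigenvalues_nonneg _

lemma sorted_spectral (M : Matrix (Fin n) (Fin n) ℂ) (hM : M.IsHermitian) :
    ∃ U : Matrix (Fin n) (Fin n) ℂ, Uᴴ * U = 1 ∧
      M = U * diagonal (fun t => (eigval M t : ℂ)) * Uᴴ := by
  classical
  set e : Equiv.Perm (Fin n) := (Fin.revPerm).trans (Tuple.sort hM.eigenvalues) with he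
  have hev : ∀ t, eigval M t = hM.eigenvalues (e t) := fun t => by
    simp [eigval, dif_pos hM, he, Equiv.trans_apply]
  set U0 : Matrix (Fin n) (Fin n) ℂ := (hM.eigenvectorUnitary : Matrix (Fin n) (Fin n) ℂ) with hU0def
  have hU0 : U0ᴴ * U0 = 1 := by
    simpa [star_eq_conjTranspose] using (Matrix.mem_unitaryGroup_iff'.mp hM.eigenvectorUnitary.2)
  have hspec : M = U0 * diagonal (RCLike.ofReal ∘ hM.eigenvalues) * U0ᴴ := by
    simpa [star_eq_conjTranspose] using hM.spectral_theorem
  refine ⟨U0.submatrix id e, ?_, ?_⟩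
  · rw [conjTranspose_submatrix]
    rw [show (U0ᴴ).submatrix (⇑e) id * U0.submatrix id ⇑e
        = ((U0ᴴ) * U0).submatrix (⇑e) (⇑e) from
      Matrix.submatrix_mul_equiv (U0ᴴ) U0 _ (Equiv.refl _) _]
    rw [hU0, Matrix.submatrix_one_equiv e]
  · have hdiag : diagonal (fun t => (eigval M t : ℂ))
        = (diagonal (RCLike.ofReal ∘ hM.eigenvalues)).submatrix e e := by
      rw [Matrix.submatrix_diagonal_equiv]
      exact congrArg diagonal (funext fun t => by simp [hev t])
    rw [hdiag, conjTranspose_submatrix, mul_assoc,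
      Matrix.submatrix_mul_equiv _ _ _ e _, Matrix.submatrix_mul_equiv _ _ _ e _,
      Matrix.submatrix_id_id, ← mul_assoc]
    exact hspec

lemma rearr (hj : j ≤ n) (μ : Fin n → ℝ) (hμ : Antitone μ)
    (c : Fin n → ℝ) (hc0 : ∀ t, 0 ≤ c t) (hc1 : ∀ t, c t ≤ 1)
    (hsum : ∑ t, c t = j) :
    ∑ t, μ t * c t ≤ ∑ t : Fin n, if (t : ℕ) < j then μ t else 0 := by
  rcases Nat.eq_zero_or_pos j with rfl | hj0
  · have : ∀ t, c t = 0 := by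
      intro t
      have := Finset.sum_eq_zero_iff_of_nonneg (fun t _ => hc0 t) |>.mp (by simpa using hsum)
      exact this t (mem_univ t)
    simp [this]
  · have hjn : j - 1 < n := by omega
    set p := μ ⟨j - 1, hjn⟩ with hp
    have key : ∀ t : Fin n, μ t * c t - (if (t : ℕ) < j then μ t else 0)
        ≤ p * (c t - (if (t : ℕ) < j then 1 else 0)) := by
      intro t
      by_cases h : (t : ℕ) < j
      · simp only [h, if_pos]
        have h1 : p ≤ μ t := hμ (by simp [Fin.le_def]; omega)
        nlinarith [hc1 t, hc0 t]
      · simp only [h, if_neg, not_false_iff]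
        have h1 : μ t ≤ p := hμ (by simp [Fin.le_def]; omega)
        nlinarith [hc0 t]
    have hcard : ∑ t : Fin n, (if (t : ℕ) < j then (1:ℝ) else 0) = j := by
      rw [Fin.sum_univ_eq_sum_range (fun i => if i < j then (1:ℝ) else 0)]
      rw [Finset.sum_ite, Finset.sum_const, Finset.sum_const]
      have : (Finset.range n).filter (· < j) = Finset.range j := by
        ext i; simp; omega
      simp [this]
    have := Finset.sum_le_sum (fun t (_ : t ∈ univ) => key t)
    have h2 : ∑ i : Fin n, p * (c i - if (i:ℕ) < j then (1:ℝ) else 0) = 0 := by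
      rw [← Finset.mul_sum, Finset.sum_sub_distrib, hsum, hcard]
      ring
    rw [h2, Finset.sum_sub_distrib] at this
    linarith [this]

lemma proj_facts (W : Matrix (Fin n) (Fin j) ℂ) (hW : Wᴴ * W = 1) :
    (∀ t, 0 ≤ ((W * Wᴴ) t t).re) ∧ (∀ t, ((W * Wᴴ) t t).re ≤ 1) ∧
      (∑ t, ((W * Wᴴ) t t).re = j) := by
  set P := W * Wᴴ with hPdef
  have hPherm : Pᴴ = P := by
    rw [hPdef, Matrix.conjTranspose_mul, Matrix.conjTranspose_conjTranspose]
  have hPP : P * P = P := by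
    rw [hPdef, Matrix.mul_assoc, ← Matrix.mul_assoc Wᴴ W Wᴴ, hW, Matrix.one_mul]
  have hdiag : ∀ t, P t t = ((∑ l, Complex.normSq (W t l) : ℝ) : ℂ) := by
    intro t
    rw [hPdef, Matrix.mul_apply]
    push_cast
    congr 1; funext l
    rw [Matrix.conjTranspose_apply, Complex.star_def, Complex.mul_conj]
  have hre : ∀ t, ((P t t).re : ℂ) = P t t := by
    intro t; rw [hdiag t]; simp
  have h0 : ∀ t, 0 ≤ (P t t).re := by
    intro t
    rw [hdiag t]
    simpa using Finset.sum_nonneg (fun l (_ : l ∈ univ) => Complex.normSq_nonneg (W t l))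
  have h1 : ∀ t, (P t t).re ≤ 1 := by
    intro t
    have hPtt : P t t = ∑ l, Complex.normSq (P t l) := by
      conv_lhs => rw [← hPP]
      rw [Matrix.mul_apply]
      push_cast
      congr 1; funext l
      have : P l t = starRingEnd ℂ (P t l) := by
        conv_lhs => rw [← hPherm]
        rw [Matrix.conjTranspose_apply, Complex.star_def]
      rw [this, Complex.mul_conj]
    have hge : Complex.normSq (P t t) ≤ (P t t).re := by
      have := Finset.single_le_sum (f := fun l => Complex.normSq (P t l))
        (fun l _ => Complex.normSq_nonneg _) (Finset.mem_univ t)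
      calc Complex.normSq (P t t) ≤ ∑ l, Complex.normSq (P t l) := this
        _ = (P t t).re := by
            have := congrArg Complex.re hPtt
            rw [Complex.ofReal_re] at this
            linarith
    have hsq : Complex.normSq (P t t) = (P t t).re ^ 2 := by
      rw [← hre t]; simp [Complex.normSq_ofReal, sq]
    nlinarith [hge, hsq, h0 t]
  refine ⟨h0, h1, ?_⟩
  have : ∑ t, ((P t t).re) = (Matrix.trace P).re := by
    rw [Matrix.trace]; simp [Matrix.diag]
  rw [this, hPdef, Matrix.trace_mul_comm, hW]
  simp

lemma trace_compression_le (hj : j ≤ n) (M : Matrix (Fin n) (Fin n) ℂ)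
    (hM : M.IsHermitian) (V : Matrix (Fin n) (Fin j) ℂ) (hV : Vᴴ * V = 1) :
    (Matrix.trace (Vᴴ * M * V)).re ≤ ∑ t : Fin n, if (t : ℕ) < j then eigval M t else 0 := by
  obtain ⟨U, hU, hMU⟩ := sorted_spectral M hM
  have hUU : U * Uᴴ = 1 := mul_eq_one_comm.mp hU
  set W := Uᴴ * V with hWdef
  have hW : Wᴴ * W = 1 := by
    rw [hWdef, Matrix.conjTranspose_mul, Matrix.conjTranspose_conjTranspose,
      Matrix.mul_assoc, ← Matrix.mul_assoc U Uᴴ V, hUU, Matrix.one_mul, hV]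
  set D := diagonal (fun t => (eigval M t : ℂ)) with hDdef
  have htr : Matrix.trace (Vᴴ * M * V) = Matrix.trace (D * (W * Wᴴ)) := by
    rw [hMU]
    rw [show Vᴴ * (U * D * Uᴴ) * V = Wᴴ * (D * W) by
      rw [hWdef, Matrix.conjTranspose_mul, Matrix.conjTranspose_conjTranspose]
      simp only [Matrix.mul_assoc]]
    rw [Matrix.trace_mul_comm, Matrix.mul_assoc]
  obtain ⟨h0, h1, hsum⟩ := proj_facts W hW
  have htr2 : (Matrix.trace (D * (W * Wᴴ))).re = ∑ t, eigval M t * ((W * Wᴴ) t t).re := by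
    rw [Matrix.trace]
    rw [Complex.re_sum]
    congr 1; funext t
    rw [Matrix.diag]
    rw [hDdef, Matrix.diagonal_mul]
    simp [Complex.re_ofReal_mul]
  rw [htr, htr2]
  exact rearr hj _ (eigval_antitone hM) _ h0 h1 hsum

lemma submatrix_one_inj {f : Fin j → Fin n} (hf : Function.Injective f) :
    (1 : Matrix (Fin n) (Fin n) ℂ).submatrix f f = 1 := by
  ext a b
  by_cases h : a = b
  · simp [h, Matrix.one_apply]
  · rw [Matrix.submatrix_apply, Matrix.one_apply_ne (fun hc => h (hf hc)),
      Matrix.one_apply_ne h]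

lemma submul_l (A B : Matrix (Fin n) (Fin n) ℂ) (f : Fin j → Fin n) :
    A.submatrix f id * B = (A * B).submatrix f id := by
  simpa using Matrix.submatrix_mul_equiv A B f (Equiv.refl _) id

lemma submul_lr (A B : Matrix (Fin n) (Fin n) ℂ) (f g : Fin j → Fin n) :
    A.submatrix f id * B.submatrix id g = (A * B).submatrix f g := by
  simpa using Matrix.submatrix_mul_equiv A B f (Equiv.refl _) g

lemma prefix_sum_eq (hj : j ≤ n) (g : Fin n → ℝ) :
    (∑ t : Fin n, if (t:ℕ) < j then g t else 0) = ∑ s : Fin j, g (Fin.castLE hj s) := by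
  set f : ℕ → ℝ := fun i => if h : i < n then g ⟨i, h⟩ else 0 with hf
  have h1 : (∑ t : Fin n, if (t:ℕ) < j then g t else 0)
      = ∑ i ∈ Finset.range n, (if i < j then f i else 0) := by
    rw [← Fin.sum_univ_eq_sum_range (fun i => if i < j then f i else 0) n]
    congr 1; funext t
    by_cases h : (t:ℕ) < j <;> simp [h, hf, t.isLt]
  have h2 : (∑ s : Fin j, g (Fin.castLE hj s)) = ∑ i ∈ Finset.range j, f i := by
    rw [← Fin.sum_univ_eq_sum_range f j]
    congr 1; funext s
    have : (s:ℕ) < n := lt_of_lt_of_le s.isLt hj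
    simp [hf, this, Fin.castLE]
  rw [h1, h2, ← Finset.sum_filter]
  congr 1
  ext i; simp; omega

lemma kyfan (hj : j ≤ n) (A B : Matrix (Fin n) (Fin n) ℂ)
    (hA : A.IsHermitian) (hB : B.IsHermitian) :
    (∑ t : Fin n, if (t:ℕ) < j then eigval (A+B) t else 0)
      ≤ (∑ t : Fin n, if (t:ℕ) < j then eigval A t else 0)
        + ∑ t : Fin n, if (t:ℕ) < j then eigval B t else 0 := by
  have hAB : (A+B).IsHermitian := hA.add hB
  obtain ⟨U, hU, hMU⟩ := sorted_spectral (A+B) hAB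
  set φ : Fin j → Fin n := Fin.castLE hj with hφ
  have hφinj : Function.Injective φ := Fin.castLE_injective hj
  set D := diagonal (fun t => (eigval (A+B) t : ℂ)) with hD
  set V := U.submatrix id φ with hV
  have hVV : Vᴴ * V = 1 := by
    rw [hV, conjTranspose_submatrix, submul_lr, hU, submatrix_one_inj hφinj]
  have hmid : Uᴴ * (A + B) * U = D := by
    rw [hMU]
    rw [show Uᴴ * (U * D * Uᴴ) * U = (Uᴴ * U) * D * (Uᴴ * U) by simp only [Matrix.mul_assoc]]
    rw [hU, Matrix.one_mul, Matrix.mul_one]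
  have hcomp : Vᴴ * (A+B) * V = D.submatrix φ φ := by
    rw [hV, conjTranspose_submatrix, submul_l, submul_lr, hmid]
  have heq : (Matrix.trace (Vᴴ * (A+B) * V)).re
      = ∑ t : Fin n, if (t:ℕ) < j then eigval (A+B) t else 0 := by
    rw [hcomp, prefix_sum_eq hj]
    rw [hD, Matrix.submatrix_diagonal _ φ hφinj, Matrix.trace_diagonal]
    rw [Complex.re_sum]
    simp [hφ]
  have hsplit : Vᴴ * (A+B) * V = Vᴴ * A * V + Vᴴ * B * V := by
    rw [Matrix.mul_add, Matrix.add_mul]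
  calc (∑ t : Fin n, if (t:ℕ) < j then eigval (A+B) t else 0)
      = (Matrix.trace (Vᴴ * A * V)).re + (Matrix.trace (Vᴴ * B * V)).re := by
        rw [← heq, hsplit, Matrix.trace_add, Complex.add_re]
    _ ≤ _ := add_le_add (trace_compression_le hj A hA V hVV)
          (trace_compression_le hj B hB V hVV)

lemma sum_eigval_eq (M : Matrix (Fin n) (Fin n) ℂ) (hM : M.IsHermitian) :
    ∑ t, eigval M t = (Matrix.trace M).re := by
  obtain ⟨U, hU, hMU⟩ := sorted_spectral M hM
  conv_rhs => rw [hMU]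
  rw [Matrix.trace_mul_comm (U * diagonal fun t => (eigval M t : ℂ)) (Uᴴ)]
  rw [← Matrix.mul_assoc, hU, Matrix.one_mul, Matrix.trace_diagonal]
  rw [Complex.re_sum]
  simp

lemma abel_log (V W : ℕ → ℝ) (m N : ℕ) (hmn : m ≤ N)
    (hVpos : ∀ i, m ≤ i → i < N → 0 < V i)
    (hWpos : ∀ i, m ≤ i → i < N → 0 < W i)
    (hVanti : ∀ i j, m ≤ i → i ≤ j → j < N → V j ≤ V i)
    (hdom : ∀ j, m ≤ j → ∑ i ∈ Finset.Ico j N, W i ≤ ∑ i ∈ Finset.Ico j N, V i) :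
    ∏ i ∈ Finset.Ico m N, W i ≤ ∏ i ∈ Finset.Ico m N, V i := by
  set T : ℕ → ℝ := fun j => ∑ i ∈ Finset.Ico j N, (V i - W i) / V i with hT
  set d : ℕ → ℝ := fun j => ∑ i ∈ Finset.Ico j N, (V i - W i) with hd
  have hd0 : ∀ j, m ≤ j → 0 ≤ d j := by
    intro j hj
    simp only [hd, Finset.sum_sub_distrib]
    linarith [hdom j hj]
  have hstep : ∀ j, j < N → ∀ (f : ℕ → ℝ),
      ∑ i ∈ Finset.Ico j N, f i = f j + ∑ i ∈ Finset.Ico (j+1) N, f i := by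
    intro j hjn f
    exact Finset.sum_eq_sum_Ico_succ_bot hjn f
  have claim : ∀ s : ℕ, ∀ j : ℕ, j + s = N → m ≤ j → d j ≤ V j * T j := by
    intro s
    induction s with
    | zero =>
        intro j hj hmj
        have : j = N := by omega
        subst this
        simp [hd, hT]
    | succ s ih =>
        intro j hj hmj
        have hjn : j < N := by omega
        have ih' := ih (j+1) (by omega) (by omega)
        have hTd : d j = (V j - W j) + d (j+1) := by
          simp only [hd]; exact hstep j hjn _
        have hTT : T j = (V j - W j) / V j + T (j+1) := by
          simp only [hT]; exact hstep j hjn _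
        have hVj : 0 < V j := hVpos j hmj hjn
        by_cases hjn1 : j + 1 < N
        · have hV1 : 0 < V (j+1) := hVpos _ (by omega) hjn1
          have hT1 : 0 ≤ T (j+1) := by
            nlinarith [hd0 (j+1) (by omega), ih']
          have hVle : V (j+1) ≤ V j := hVanti j (j+1) hmj (by omega) hjn1
          have : d (j+1) ≤ V j * T (j+1) := by nlinarith
          rw [hTd, hTT]
          field_simp
          nlinarith
        · have hjeq : j + 1 = N := by omega
          have h1 : d (j+1) = 0 := by simp [hd, hjeq]
          have h2 : T (j+1) = 0 := by simp [hT, hjeq]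
          rw [hTd, hTT, h1, h2]
          field_simp
          simp
  have hTm : 0 ≤ T m := by
    rcases Nat.eq_or_lt_of_le hmn with h | h
    · simp [hT, h]
    · have := claim (N - m) m (by omega) le_rfl
      nlinarith [hd0 m le_rfl, hVpos m le_rfl h]
  have hlog : ∑ i ∈ Finset.Ico m N, Real.log (W i) ≤ ∑ i ∈ Finset.Ico m N, Real.log (V i) := by
    have key : ∀ i ∈ Finset.Ico m N, Real.log (W i) - Real.log (V i) ≤ (W i - V i) / V i := by
      intro i hi
      rw [Finset.mem_Ico] at hi
      have hv := hVpos i hi.1 hi.2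
      have hw := hWpos i hi.1 hi.2
      have h1 : Real.log (W i / V i) ≤ W i / V i - 1 :=
        Real.log_le_sub_one_of_pos (by positivity)
      rw [Real.log_div (ne_of_gt hw) (ne_of_gt hv)] at h1
      have : W i / V i - 1 = (W i - V i) / V i := by field_simp
      linarith [h1, this.le]
    have := Finset.sum_le_sum key
    rw [Finset.sum_sub_distrib] at this
    have hT' : ∑ i ∈ Finset.Ico m N, (W i - V i) / V i = -T m := by
      simp only [hT, ← Finset.sum_neg_distrib]
      congr 1; funext i
      ring
    rw [hT'] at this
    linarith
  calc ∏ i ∈ Finset.Ico m N, W i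
      = Real.exp (∑ i ∈ Finset.Ico m N, Real.log (W i)) := by
        rw [Real.exp_sum]
        exact (Finset.prod_congr rfl (fun i hi => by
          rw [Finset.mem_Ico] at hi
          rw [Real.exp_log (hWpos i hi.1 hi.2)])).symm
    _ ≤ Real.exp (∑ i ∈ Finset.Ico m N, Real.log (V i)) := Real.exp_le_exp.mpr hlog
    _ = ∏ i ∈ Finset.Ico m N, V i := by
        rw [Real.exp_sum]
        exact Finset.prod_congr rfl (fun i hi => by
          rw [Finset.mem_Ico] at hi
          rw [Real.exp_log (hVpos i hi.1 hi.2)])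



lemma two_ge_amgm {x y G : ℝ} (hx : 0 ≤ x) (hy : 0 ≤ y) (hG : 0 ≤ G)
    (h : x * y = G * G) : 2 * G ≤ x + y := by
  nlinarith [sq_nonneg (x - y), sq_nonneg (x + y - 2*G), sq_nonneg (x+y+2*G)]

lemma part2 (k : ℕ) (hk : 0 < k) (a b : Fin k → ℝ)
    (ha : ∀ i, 0 ≤ a i) (hb : ∀ i, 0 ≤ b i) :
    ∏ i, a i + ∏ i, b i + ((2:ℝ)^k - 2) * ∏ i, Real.sqrt (a i * b i)
      ≤ ∏ i, (a i + b i) := by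
  classical
  set F : Finset (Fin k) → ℝ := fun t => (∏ i ∈ t, a i) * ∏ i ∈ (univ \ t), b i with hF
  have hFnonneg : ∀ t, 0 ≤ F t := fun t =>
    mul_nonneg (Finset.prod_nonneg fun i _ => ha i) (Finset.prod_nonneg fun i _ => hb i)
  set G : ℝ := ∏ i, Real.sqrt (a i * b i) with hG
  have hGnn : 0 ≤ G := Finset.prod_nonneg fun i _ => Real.sqrt_nonneg _
  have hGsq : G * G = (∏ i, a i) * ∏ i, b i := by
    rw [hG, ← Finset.prod_mul_distrib]
    rw [show (fun i => Real.sqrt (a i * b i) * Real.sqrt (a i * b i)) = fun i => a i * b i by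
      funext i; exact Real.mul_self_sqrt (mul_nonneg (ha i) (hb i))]
    rw [← Finset.prod_mul_distrib]
  have hFmul : ∀ t : Finset (Fin k), F t * F (univ \ t) = G * G := by
    intro t
    rw [hGsq, hF]
    simp only [Finset.sdiff_sdiff_eq_self (Finset.subset_univ t)]
    rw [show (∏ i ∈ t, a i) * (∏ i ∈ univ \ t, b i) * ((∏ i ∈ univ \ t, a i) * ∏ i ∈ t, b i)
        = ((∏ i ∈ univ \ t, a i) * ∏ i ∈ t, a i) * ((∏ i ∈ univ \ t, b i) * ∏ i ∈ t, b i) by ring]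
    rw [Finset.prod_sdiff (Finset.subset_univ t), Finset.prod_sdiff (Finset.subset_univ t)]
  -- expansion
  have hexp : ∏ i, (a i + b i) = ∑ t ∈ (univ : Finset (Fin k)).powerset, F t :=
    Finset.prod_add a b univ
  have huniv_mem : (univ : Finset (Fin k)) ∈ (univ : Finset (Fin k)).powerset := by
    simp
  have hne : (∅ : Finset (Fin k)) ≠ univ := by
    intro h
    have h0 : (⟨0, hk⟩ : Fin k) ∈ (univ : Finset (Fin k)) := Finset.mem_univ _
    rw [← h] at h0
    simp at h0
  have hempty_mem : (∅ : Finset (Fin k)) ∈ (univ : Finset (Fin k)).powerset.erase univ :=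
    Finset.mem_erase.mpr ⟨hne, by simp⟩
  set M := (((univ : Finset (Fin k)).powerset.erase univ).erase ∅) with hM
  have hsplit : ∑ t ∈ (univ : Finset (Fin k)).powerset, F t
      = F univ + (F ∅ + ∑ t ∈ M, F t) := by
    rw [← Finset.add_sum_erase _ F huniv_mem, ← Finset.add_sum_erase _ F hempty_mem]
  have hFuniv : F univ = ∏ i, a i := by simp [hF]
  have hFempty : F ∅ = ∏ i, b i := by simp [hF]
  have hmemM : ∀ t, t ∈ M ↔ t ≠ ∅ ∧ t ≠ univ := by
    intro t
    simp only [hM, Finset.mem_erase, Finset.mem_powerset, Finset.subset_univ, and_true]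
  have hcomplM : ∀ t ∈ M, univ \ t ∈ M := by
    intro t ht
    rw [hmemM] at ht ⊢
    constructor
    · intro hc
      rw [Finset.sdiff_eq_empty_iff_subset] at hc
      exact ht.2 (Finset.univ_subset_iff.mp hc)
    · intro hc
      have := congrArg (fun s => univ \ s) hc
      simp only [Finset.sdiff_sdiff_eq_self (Finset.subset_univ t), Finset.sdiff_self] at this
      exact ht.1 this
  have hsum_compl : ∑ t ∈ M, F (univ \ t) = ∑ t ∈ M, F t := by
    apply Finset.sum_nbij' (fun t => univ \ t) (fun t => univ \ t)
    · exact hcomplM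
    · exact hcomplM
    · intro t _; simp
    · intro t _; simp
    · intro t _; rfl
  have hMcard : (M.card : ℝ) = 2^k - 2 := by
    have h1 : (univ : Finset (Fin k)).powerset.card = 2^k := by
      rw [Finset.card_powerset, Finset.card_univ, Fintype.card_fin]
    have h2 : ((univ : Finset (Fin k)).powerset.erase univ).card = 2^k - 1 := by
      rw [Finset.card_erase_of_mem huniv_mem, h1]
    have h3 : M.card = 2^k - 2 := by
      rw [hM, Finset.card_erase_of_mem hempty_mem, h2]
      omega
    rw [h3]
    have : (2:ℕ) ≤ 2^k := by
      calc (2:ℕ) = 2^1 := rfl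
      _ ≤ 2^k := Nat.pow_le_pow_right (by norm_num) hk
    push_cast [Nat.cast_sub this]
    norm_num
  have hMsum : ((2:ℝ)^k - 2) * G ≤ ∑ t ∈ M, F t := by
    have h2 : ∀ t ∈ M, 2 * G ≤ F t + F (univ \ t) := by
      intro t _
      exact two_ge_amgm (hFnonneg t) (hFnonneg _) hGnn (hFmul t)
    have := Finset.sum_le_sum h2
    rw [Finset.sum_add_distrib, hsum_compl, Finset.sum_const, nsmul_eq_mul] at this
    rw [hMcard] at this
    nlinarith [this]
  rw [hexp, hsplit, hFuniv, hFempty]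
  linarith [hMsum]
/-- extend `g : Fin n → ℝ` to `ℕ` by zero -/
noncomputable def ext (g : Fin n → ℝ) : ℕ → ℝ := fun i => if h : i < n then g ⟨i, h⟩ else 0

lemma prefix_range (hj : j ≤ n) (g : Fin n → ℝ) :
    ∑ i ∈ Finset.range j, ext g i = ∑ t : Fin n, if (t:ℕ) < j then g t else 0 := by
  have h1 : (∑ t : Fin n, if (t:ℕ) < j then g t else 0)
      = ∑ i ∈ Finset.range n, (if i < j then ext g i else 0) := by
    rw [← Fin.sum_univ_eq_sum_range (fun i => if i < j then ext g i else 0) n]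
    congr 1; funext t
    by_cases h : (t:ℕ) < j <;> simp [h, ext, t.isLt]
  rw [h1, ← Finset.sum_filter]
  congr 1
  ext i; simp; omega

lemma total_range (g : Fin n → ℝ) : ∑ i ∈ Finset.range n, ext g i = ∑ t : Fin n, g t := by
  rw [← Fin.sum_univ_eq_sum_range (ext g) n]
  congr 1; funext t
  simp [ext, t.isLt]

lemma prod_window {k : ℕ} (hk : 0 < k) (hkn : k ≤ n) (g : Fin n → ℝ) :
    ∏ i ∈ Finset.Ico (n - k) n, ext g i
      = ∏ t : Fin k, g ⟨n - k + (t : ℕ), (by omega : n - k + (t : ℕ) < n + 0)⟩ := by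
  rw [Finset.prod_Ico_eq_prod_range]
  have hnk : n - (n - k) = k := by omega
  rw [hnk, ← Fin.prod_univ_eq_prod_range (fun i => ext g (n - k + i)) k]
  congr 1; funext t
  have h : n - k + (t:ℕ) < n := by omega
  simp [ext, h]

lemma part1 {k : ℕ} (hk : 0 < k) (hkn : k ≤ n)
    (A B : Matrix (Fin n) (Fin n) ℂ) (hA : A.PosSemidef) (hB : B.PosSemidef) :
    ∏ t : Fin k, (eigval A ⟨n - k + (t : ℕ), (by omega : n - k + (t : ℕ) < n + 0)⟩ + eigval B ⟨n - k + (t : ℕ), (by omega : n - k + (t : ℕ) < n + 0)⟩)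
      ≤ ∏ t : Fin k, eigval (A + B) ⟨n - k + (t : ℕ), (by omega : n - k + (t : ℕ) < n + 0)⟩ := by
  have hn : 0 < n := lt_of_lt_of_le hk hkn
  have hAB : (A + B).PosSemidef := hA.add hB
  set v : Fin n → ℝ := eigval (A + B) with hv
  set w : Fin n → ℝ := fun t => eigval A t + eigval B t with hw
  have hvanti : Antitone v := eigval_antitone hAB.isHermitian
  have hwanti : Antitone w :=
    Antitone.add (eigval_antitone hA.isHermitian) (eigval_antitone hB.isHermitian)
  have hvnn : ∀ t, 0 ≤ v t := fun t => eigval_nonneg hAB t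
  have hwnn : ∀ t, 0 ≤ w t := fun t =>
    add_nonneg (eigval_nonneg hA t) (eigval_nonneg hB t)
  -- prefix sums inequality
  have hpre : ∀ m, m ≤ n →
      ∑ i ∈ Finset.range m, ext v i ≤ ∑ i ∈ Finset.range m, ext w i := by
    intro m hm
    rw [prefix_range hm v, prefix_range hm w]
    have hsplit : (∑ t : Fin n, if (t:ℕ) < m then w t else 0)
        = (∑ t : Fin n, if (t:ℕ) < m then eigval A t else 0)
          + ∑ t : Fin n, if (t:ℕ) < m then eigval B t else 0 := by
      rw [← Finset.sum_add_distrib]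
      congr 1; funext t
      by_cases h : (t:ℕ) < m <;> simp [h, hw]
    rw [hsplit]
    exact kyfan hm A B hA.isHermitian hB.isHermitian
  -- equal totals
  have htot : ∑ t, v t = ∑ t, w t := by
    rw [hv, sum_eigval_eq _ hAB.isHermitian, Matrix.trace_add, Complex.add_re]
    rw [show ∑ t, w t = ∑ t, eigval A t + ∑ t, eigval B t by
      rw [← Finset.sum_add_distrib]]
    rw [sum_eigval_eq _ hA.isHermitian, sum_eigval_eq _ hB.isHermitian]
  -- suffix domination
  have hdom : ∀ m, n - k ≤ m →
      ∑ i ∈ Finset.Ico m n, ext w i ≤ ∑ i ∈ Finset.Ico m n, ext v i := by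
    intro m _
    by_cases hm : m ≤ n
    · rw [Finset.sum_Ico_eq_sub _ hm, Finset.sum_Ico_eq_sub _ hm,
        total_range v, total_range w, htot]
      have := hpre m hm
      linarith
    · rw [Finset.Ico_eq_empty (by omega)]
      simp
  -- last entry
  have hlast : n - 1 < n := by omega
  have hvw_last : w ⟨n-1, hlast⟩ ≤ v ⟨n-1, hlast⟩ := by
    have := hdom (n-1) (by omega)
    have hIco : Finset.Ico (n-1) n = {n-1} := by
      ext i; simp; omega
    rw [hIco, Finset.sum_singleton, Finset.sum_singleton] at this
    simpa [ext, hlast] using this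
  by_cases hc : w ⟨n-1, hlast⟩ ≤ 0
  · -- last w entry is zero: RHS of part1 is zero
    have hzero : w ⟨n-1, hlast⟩ = 0 := le_antisymm hc (hwnn _)
    have hklt : k - 1 < k := by omega
    have hidx : (⟨n - k + ((⟨k-1, hklt⟩ : Fin k) : ℕ), by omega⟩ : Fin n) = ⟨n-1, hlast⟩ := by
      apply Fin.ext; simp; omega
    calc ∏ t : Fin k, (eigval A ⟨n - k + (t : ℕ), (by omega : n - k + (t : ℕ) < n + 0)⟩ + eigval B ⟨n - k + (t : ℕ), (by omega : n - k + (t : ℕ) < n + 0)⟩)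
        = 0 := by
          apply Finset.prod_eq_zero (Finset.mem_univ (⟨k-1, hklt⟩ : Fin k))
          rw [show (⟨n - k + ((⟨k-1, hklt⟩ : Fin k) : ℕ), by omega⟩ : Fin n) = ⟨n-1, hlast⟩ from hidx]
          exact hzero
      _ ≤ _ := Finset.prod_nonneg (fun t _ => hvnn _)
  · push_neg at hc
    have habel := abel_log (ext v) (ext w) (n - k) n (by omega)
      (by
        intro i hi1 hi2
        have : v ⟨n-1, hlast⟩ ≤ v ⟨i, hi2⟩ := hvanti (by simp [Fin.le_def]; omega)
        have h2 : ext v i = v ⟨i, hi2⟩ := by simp [ext, hi2]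
        rw [h2]
        linarith [hvw_last])
      (by
        intro i hi1 hi2
        have : w ⟨n-1, hlast⟩ ≤ w ⟨i, hi2⟩ := hwanti (by simp [Fin.le_def]; omega)
        have h2 : ext w i = w ⟨i, hi2⟩ := by simp [ext, hi2]
        rw [h2]
        linarith)
      (by
        intro i j2 hi hij hj2
        have hi2 : i < n := by omega
        have : v ⟨j2, hj2⟩ ≤ v ⟨i, hi2⟩ := hvanti (by simp [Fin.le_def]; omega)
        simpa [ext, hi2, hj2] using this)
      hdom
    rw [prod_window hk hkn v, prod_window hk hkn w] at habel
    exact habel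


end ProdEig

theorem prod_smallest_eig_add_ge (n k : ℕ) (hn : 0 < n) (hk : 0 < k) (hkn : k ≤ n)
    (A B : Matrix (Fin n) (Fin n) ℂ) (hA : A.PosSemidef) (hB : B.PosSemidef) :
    (∏ t : Fin k, eigval (A + B) ⟨n - k + (t : ℕ), by omega⟩ ≥
        ∏ t : Fin k, (eigval A ⟨n - k + (t : ℕ), by omega⟩ +
          eigval B ⟨n - k + (t : ℕ), by omega⟩)) ∧
      ∏ t : Fin k, (eigval A ⟨n - k + (t : ℕ), by omega⟩ +
          eigval B ⟨n - k + (t : ℕ), by omega⟩) ≥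
        ∏ t : Fin k, eigval A ⟨n - k + (t : ℕ), by omega⟩ +
          ∏ t : Fin k, eigval B ⟨n - k + (t : ℕ), by omega⟩ +
          ((2 : ℝ) ^ k - 2) *
            ∏ t : Fin k, Real.sqrt (eigval A ⟨n - k + (t : ℕ), by omega⟩ *
              eigval B ⟨n - k + (t : ℕ), by omega⟩) := by
  constructor
  · exact ProdEig.part1 hk hkn A B hA hB
  · exact ProdEig.part2 k hk
      (fun t => eigval A ⟨n - k + (t : ℕ), by omega⟩)
      (fun t => eigval B ⟨n - k + (t : ℕ), by omega⟩)
      (fun t => ProdEig.eigval_nonneg hA _)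
      (fun t => ProdEig.eigval_nonneg hB _)
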